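/- Every finitely generated dead-ending universe has finite test sets, and more precisely: for any Left dead-end H, there are only finitely many equivalence classes of Left dead-ends G with G ≥ H. -/

import Mathlib

/-- A Left dead-end: a partizan game in which no subposition has a Left option,
modeled as a finitely-branching rooted tree of Right options. -/
inductive LDE : Type where
  | node : List LDE → LDE

/-- The (Right) options of a Left dead-end. -/
def LDE.opts : LDE → List LDE
  | .node l => l

/-- The dead-end order: `G ≥ H` iff every Right option of `G` is `≥` some Right
option of `H`, and if `G` has no Right options then neither does `H`. -/
def LDE.Ge : LDE → LDE → Prop
  | .node gs, .node hs =>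
      (∀ g ∈ gs, ∃ h ∈ hs, LDE.Ge g h) ∧ (gs = [] → hs = [])
termination_by G _ => sizeOf G
decreasing_by
  have := List.sizeOf_lt_of_mem ‹g ∈ gs›; simp; omega

/-- Equality (equivalence) in the dead-end order. -/
def LDE.Eqv (G H : LDE) : Prop := LDE.Ge G H ∧ LDE.Ge H G

theorem LDE.ge_iff (gs hs : List LDE) :
    LDE.Ge (.node gs) (.node hs) ↔
      (∀ g ∈ gs, ∃ h ∈ hs, LDE.Ge g h) ∧ (gs = [] → hs = []) := by
  rw [LDE.Ge]

theorem LDE.Ge.refl : ∀ G : LDE, LDE.Ge G G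
  | .node gs => by
    rw [LDE.ge_iff]
    exact ⟨fun g hg => ⟨g, hg, LDE.Ge.refl g⟩, fun h => h⟩
termination_by G => sizeOf G
decreasing_by have := List.sizeOf_lt_of_mem hg; simp; omega

theorem LDE.Ge.trans : ∀ G H K : LDE, LDE.Ge G H → LDE.Ge H K → LDE.Ge G K
  | .node gs, .node hs, .node ks => by
    rw [LDE.ge_iff, LDE.ge_iff, LDE.ge_iff]
    rintro ⟨h1, h2⟩ ⟨h3, h4⟩
    refine ⟨fun g hg => ?_, fun h => h4 (h2 h)⟩
    obtain ⟨h, hh, hgh⟩ := h1 g hg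
    obtain ⟨k, hk, hhk⟩ := h3 h hh
    exact ⟨k, hk, LDE.Ge.trans g h k hgh hhk⟩
termination_by G _ _ => sizeOf G
decreasing_by have := List.sizeOf_lt_of_mem hg; simp; omega

/-- Height (formal birthday) of a Left dead-end. -/
def LDE.height : LDE → ℕ
  | .node l => l.attach.foldr (fun g n => max (g.1.height + 1) n) 0
termination_by G => sizeOf G
decreasing_by have := List.sizeOf_lt_of_mem g.2; simp; omega

theorem LDE.height_node (l : List LDE) :
    LDE.height (.node l) = l.attach.foldr (fun g n => max (g.1.height + 1) n) 0 := by
  simp [LDE.height]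

theorem foldr_max_le {l : List LDE} {n : ℕ}
    (h : ∀ g ∈ l, LDE.height g + 1 ≤ n) :
    l.attach.foldr (fun g m => max (g.1.height + 1) m) 0 ≤ n := by
  induction l with
  | nil => simp
  | cons a l ih =>
      simp only [List.attach_cons, List.foldr_cons, List.foldr_map]
      have h1 := h a (List.mem_cons_self (a := a) (l := l))
      have h2 : l.attach.foldr (fun g m => max (g.1.height + 1) m) 0 ≤ n := by
        apply ih; intro g hg; exact h g (List.mem_cons_of_mem a hg)
      omega

theorem le_foldr_max {l : List LDE} {g : LDE} (hg : g ∈ l) :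
    LDE.height g + 1 ≤ l.attach.foldr (fun g m => max (g.1.height + 1) m) 0 := by
  induction l with
  | nil => simp at hg
  | cons a l ih =>
      simp only [List.attach_cons, List.foldr_cons, List.foldr_map]
      rcases List.mem_cons.mp hg with h | h
      · subst h; omega
      · have := ih h
        omega

theorem LDE.height_le_of_mem {l : List LDE} {g : LDE} (hg : g ∈ l) :
    LDE.height g + 1 ≤ LDE.height (.node l) := by
  rw [LDE.height_node]; exact le_foldr_max hg

theorem LDE.height_node_le {l : List LDE} {n : ℕ}
    (h : ∀ g ∈ l, LDE.height g + 1 ≤ n) : LDE.height (.node l) ≤ n := by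
  rw [LDE.height_node]; exact foldr_max_le h

theorem LDE.height_le_of_ge : ∀ G H : LDE, LDE.Ge G H → LDE.height G ≤ LDE.height H
  | .node gs, .node hs => by
    rw [LDE.ge_iff]
    rintro ⟨h1, _⟩
    apply LDE.height_node_le
    intro g hg
    obtain ⟨h, hh, hgh⟩ := h1 g hg
    have := LDE.height_le_of_ge g h hgh
    have := LDE.height_le_of_mem hh
    omega
termination_by G _ => sizeOf G
decreasing_by have := List.sizeOf_lt_of_mem hg; simp; omega

open Classical in
/-- Representatives of all equivalence classes of height `≤ n`. -/
noncomputable def reps : ℕ → List LDE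
  | 0 => [.node []]
  | n + 1 => ((reps n).sublists.map fun l => LDE.node l)

open Classical in
theorem reps_complete : ∀ n : ℕ, ∀ G : LDE, LDE.height G ≤ n →
    ∃ K ∈ reps n, LDE.Eqv G K := by
  intro n
  induction n with
  | zero =>
      rintro ⟨gs⟩ hG
      have hgs : gs = [] := by
        cases gs with
        | nil => rfl
        | cons a l =>
            have := LDE.height_le_of_mem (List.mem_cons_self (a := a) (l := l))
            omega
      subst hgs
      exact ⟨.node [], by simp [reps], LDE.Ge.refl _, LDE.Ge.refl _⟩
  | succ n ih =>
      rintro ⟨gs⟩ hG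
      -- each option has height ≤ n
      have hopt : ∀ g ∈ gs, LDE.height g ≤ n := by
        intro g hg
        have := LDE.height_le_of_mem hg
        omega
      set hs := (reps n).filter (fun k => decide (∃ g ∈ gs, LDE.Eqv g k)) with hhs
      refine ⟨.node hs, ?_, ?_, ?_⟩
      · rw [reps]
        simp only [List.mem_map, List.mem_sublists]
        exact ⟨hs, List.filter_sublist, rfl⟩
      · rw [LDE.ge_iff]
        constructor
        · intro g hg
          obtain ⟨k, hk, hgk⟩ := ih g (hopt g hg)
          refine ⟨k, ?_, hgk.1⟩
          rw [hhs, List.mem_filter]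
          exact ⟨hk, by simp only [decide_eq_true_eq]; exact ⟨g, hg, hgk⟩⟩
        · intro h
          subst h
          rw [hhs]
          apply List.filter_eq_nil_iff.mpr
          intro k _
          simp
      · rw [LDE.ge_iff]
        constructor
        · intro k hk
          rw [hhs, List.mem_filter] at hk
          obtain ⟨g, hg, hgk⟩ := by simpa using hk.2
          exact ⟨g, hg, hgk.2⟩
        · intro h
          by_contra hne
          obtain ⟨g, hg⟩ := List.exists_mem_of_ne_nil gs hne
          obtain ⟨k, hk, hgk⟩ := ih g (hopt g hg)
          have : k ∈ hs := by
            rw [hhs, List.mem_filter]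
            exact ⟨hk, by simp only [decide_eq_true_eq]; exact ⟨g, hg, hgk⟩⟩
          rw [h] at this
          simp at this

/-- for any Left dead-end `H`, there are only finitely many
equivalence classes of Left dead-ends `G` with `G ≥ H`. -/
theorem stmt19 (H : LDE) :
    ∃ L : List LDE, ∀ G : LDE, LDE.Ge G H → ∃ K ∈ L, LDE.Eqv G K := by
  refine ⟨reps (LDE.height H), fun G hG => ?_⟩
  exact reps_complete _ G (LDE.height_le_of_ge G H hG)
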